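/- If G is a connected graph containing an even cycle, then the vertex set of the line graph of G can be partitioned into a matching together with at most one triangle; that is, either the line graph has a perfect matching, or its vertices partition into the endpoints of a matching plus one triangle. -/

import Mathlib

open Finset

set_option linter.unusedSectionVars false
set_option linter.unusedTactic false
set_option linter.unnecessarySeqFocus false
set_option linter.unusedVariables false
set_option maxHeartbeats 1000000

namespace Stmt8

open SimpleGraph



variable {V : Type*} [Fintype V] [DecidableEq V]

open Classical in
noncomputable def ES (H : SimpleGraph V) : Finset (Sym2 V) :=
  Finset.univ.filter (· ∈ H.edgeSet)

open Classical in
lemma mem_ES {H : SimpleGraph V} {e : Sym2 V} : e ∈ ES H ↔ e ∈ H.edgeSet := by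
  simp [ES]

open Classical in
noncomputable def cnt (s : Finset (Sym2 V)) (o : Sym2 V → V) (v : V) : ℕ :=
  (s.filter (fun e => o e = v)).card

def valid (s : Finset (Sym2 V)) (o : Sym2 V → V) : Prop := ∀ e ∈ s, o e ∈ e

noncomputable def oth (e : Sym2 V) (v : V) : V :=
  if h : v ∈ e then Sym2.Mem.other' h else v

noncomputable def flip (t : Finset (Sym2 V)) (o : Sym2 V → V) : Sym2 V → V :=
  fun e => if e ∈ t then oth e (o e) else o e

lemma oth_mem {e : Sym2 V} {v : V} (h : v ∈ e) : oth e v ∈ e := by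
  rw [oth, dif_pos h]; exact Sym2.other_mem' h

lemma oth_ne {e : Sym2 V} {v : V} (hd : ¬ e.IsDiag) (h : v ∈ e) : oth e v ≠ v := by
  rw [oth, dif_pos h, ← Sym2.other_eq_other']; exact Sym2.other_ne hd h

lemma mem_cases {e : Sym2 V} {v w : V} (h : v ∈ e) (h2 : w ∈ e) : w = v ∨ w = oth e v := by
  rw [oth, dif_pos h]
  conv at h2 => rw [← Sym2.other_spec' h]
  rwa [Sym2.mem_iff] at h2

lemma oth_eq {e : Sym2 V} {v w : V} (h : v ∈ e) (hw : w ∈ e) (hne : w ≠ v) : oth e v = w :=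
  ((mem_cases h hw).resolve_left hne).symm

open Classical in
lemma cnt_congr {s : Finset (Sym2 V)} {o o' : Sym2 V → V} (h : ∀ e ∈ s, o e = o' e) (v : V) :
    cnt s o v = cnt s o' v := by
  unfold cnt
  congr 1
  exact Finset.filter_congr (fun e he => by rw [h e he])

open Classical in
lemma cnt_union {s t : Finset (Sym2 V)} (hd : Disjoint s t) (o : Sym2 V → V) (v : V) :
    cnt (s ∪ t) o v = cnt s o v + cnt t o v := by
  unfold cnt
  rw [Finset.filter_union, Finset.card_union_of_disjoint]
  exact Finset.disjoint_filter_filter hd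

open Classical in
lemma sum_cnt (s : Finset (Sym2 V)) (o : Sym2 V → V) : ∑ v, cnt s o v = s.card :=
  (Finset.card_eq_sum_card_fiberwise (fun e _ => Finset.mem_univ (o e))).symm

lemma valid_flip {s t : Finset (Sym2 V)} {o : Sym2 V → V} (hv : valid s o) :
    valid s (flip t o) := by
  intro e he
  unfold flip
  split
  · exact oth_mem (hv e he)
  · exact hv e he

open Classical in
lemma flip_parity {s t : Finset (Sym2 V)} {o : Sym2 V → V} (hv : valid s o)
    (hd : ∀ e ∈ s, ¬ e.IsDiag) (ht : t ⊆ s) (v : V) :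
    ((cnt s (flip t o) v : ZMod 2)) = (cnt s o v : ZMod 2) + ((t.filter (fun e => v ∈ e)).card : ZMod 2) := by
  have hsplit : s = t ∪ (s \ t) := by rw [Finset.union_sdiff_of_subset ht]
  have hdisj : Disjoint t (s \ t) := Finset.disjoint_sdiff
  have key : cnt t (flip t o) v + cnt t o v = (t.filter (fun e => v ∈ e)).card := by
    have h1 : cnt t (flip t o) v = (t.filter (fun e => oth e (o e) = v)).card := by
      unfold cnt
      congr 1
      refine Finset.filter_congr (fun e he => ?_)
      unfold flip
      rw [if_pos he]
    have h2 : Disjoint (t.filter (fun e => oth e (o e) = v)) (t.filter (fun e => o e = v)) := by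
      rw [Finset.disjoint_filter]
      intro e he h3 h4
      exact oth_ne (hd e (ht he)) (hv e (ht he)) (h3.trans h4.symm)
    have h3 : (t.filter (fun e => oth e (o e) = v)) ∪ (t.filter (fun e => o e = v))
        = t.filter (fun e => v ∈ e) := by
      rw [← Finset.filter_or]
      refine Finset.filter_congr (fun e he => ?_)
      constructor
      · rintro (h | h)
        · rw [← h]; exact oth_mem (hv e (ht he))
        · rw [← h]; exact hv e (ht he)
      · intro hmem
        rcases mem_cases (hv e (ht he)) hmem with h | h
        · exact Or.inr h.symm
        · exact Or.inl h.symm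
    have key2 : (t.filter (fun e => v ∈ e)).card
        = cnt t (flip t o) v + cnt t o v := by
      rw [← h3, Finset.card_union_of_disjoint h2, h1]
      rfl
    omega
  have e1 : cnt s (flip t o) v = cnt t (flip t o) v + cnt (s \ t) (flip t o) v := by
    rw [← cnt_union hdisj, ← hsplit]
  have e1' : cnt (s \ t) (flip t o) v = cnt (s \ t) o v := by
    refine cnt_congr (fun e he => ?_) v
    unfold flip
    rw [if_neg (Finset.mem_sdiff.mp he).2]
  have e2 : cnt s o v = cnt t o v + cnt (s \ t) o v := by
    rw [← cnt_union hdisj, ← hsplit]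
  rw [e1, e1', e2, ← key]
  push_cast
  have hz : ∀ x y z : ZMod 2, x + z = y + z + (x + y) := by decide
  exact hz _ _ _



variable {V : Type*} [Fintype V] [DecidableEq V]

-- walk incidence parity
lemma walk_countP {H : SimpleGraph V} (a : V) :
    ∀ {x y : V} (p : H.Walk x y),
      ((p.edges.countP (fun e => a ∈ e)) : ZMod 2)
        = (if a = x then 1 else 0) + (if a = y then 1 else 0) := by
  intro x y p
  induction p with
  | nil =>
    simp only [Walk.edges_nil, List.countP_nil, Nat.cast_zero]
    split_ifs <;> decide
  | @cons u v w h q ih =>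
    have hcons : (Walk.cons h q).edges.countP (fun e => a ∈ e)
        = q.edges.countP (fun e => a ∈ e) + (if a ∈ s(u, v) then 1 else 0) := by
      simp [Walk.edges_cons, List.countP_cons]
    rw [hcons]
    push_cast
    rw [ih]
    have hne : u ≠ v := h.ne
    by_cases hu : a = u <;> by_cases hv : a = v
    · exact absurd (hu.symm.trans hv) hne
    all_goals
      by_cases hy : a = w <;>
        simp only [hu, hv, hy, Sym2.mem_iff, if_true, if_false] <;>
        push_cast <;>
        split_ifs <;>
        first
          | decide
          | (exfalso; subst_vars; simp_all)

lemma nodup_filter_card {l : List (Sym2 V)} (hn : l.Nodup) (P : Sym2 V → Prop) [DecidablePred P] :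
    (l.toFinset.filter P).card = l.countP (fun e => P e) := by
  induction l with
  | nil => simp
  | cons e l ih =>
    have hn' : l.Nodup := hn.of_cons
    have hne : e ∉ l := (List.nodup_cons.mp hn).1
    rw [List.toFinset_cons, List.countP_cons]
    by_cases hP : P e
    · rw [Finset.filter_insert, if_pos hP, Finset.card_insert_of_notMem (by
        simp only [Finset.mem_filter, List.mem_toFinset]; exact fun hc => hne hc.1)]
      simp [ih hn', hP]
    · rw [Finset.filter_insert, if_neg hP]
      simp [ih hn', hP]



variable {V : Type*} [Fintype V] [DecidableEq V]

lemma cast_zero_iff_even (n : ℕ) : (n : ZMod 2) = 0 ↔ Even n := by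
  rw [ZMod.natCast_eq_zero_iff]; exact (even_iff_two_dvd).symm

lemma cast_one_iff_odd (n : ℕ) : (n : ZMod 2) = 1 ↔ Odd n := by
  constructor
  · intro h
    rcases Nat.even_or_odd n with he | ho
    · rw [(cast_zero_iff_even n).mpr he] at h; exact absurd h (by decide)
    · exact ho
  · intro ho
    rcases ho with ⟨k, hk⟩
    subst hk
    push_cast
    have : (k : ZMod 2) * 2 = 0 := by
      have : (2 : ZMod 2) = 0 := rfl
      rw [this, mul_zero]
    rw [mul_comm] at this
    rw [this, zero_add]

lemma zmod2_cases (x : ZMod 2) : x = 0 ∨ x = 1 := by revert x; decide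

lemma zmod2_add_one_eq_iff : ∀ x y : ZMod 2, x + 1 = y ↔ x ≠ y := by decide

lemma mem_support_of_edge {H : SimpleGraph V} {e : Sym2 V} {v : V}
    (he : e ∈ H.edgeSet) (hv : v ∈ e) : v ∈ H.support := by
  induction e with
  | _ x y =>
    rw [Sym2.mem_iff] at hv
    rcases hv with rfl | rfl
    · exact ⟨y, (SimpleGraph.mem_edgeSet H).mp he⟩
    · exact ⟨x, ((SimpleGraph.mem_edgeSet H).mp he).symm⟩

open Classical in
lemma cnt_eq_zero_of_not_support {H : SimpleGraph V} {o : Sym2 V → V}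
    (hv : valid (ES H) o) {v : V} (h : v ∉ H.support) : cnt (ES H) o v = 0 := by
  unfold cnt
  rw [Finset.card_eq_zero, Finset.filter_eq_empty_iff]
  intro e he heq
  exact h (mem_support_of_edge (mem_ES.mp he) (heq ▸ hv e he))

open Classical in
lemma exists_orient (H : SimpleGraph V)
    (hec : ∀ x y, x ∈ H.support → y ∈ H.support → H.Reachable x y)
    (b : V → ZMod 2) (hb0 : ∀ v, v ∉ H.support → b v = 0)
    (hsum : ∑ v, b v = ((ES H).card : ZMod 2)) :
    ∃ o, valid (ES H) o ∧ ∀ v, ((cnt (ES H) o v : ZMod 2)) = b v := by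
  -- initial orientation
  have hmem : ∀ e : Sym2 V, ∃ v, v ∈ e := fun e => by
    induction e with
    | _ x y => exact ⟨x, Sym2.mem_mk_left x y⟩
  set o0 : Sym2 V → V := fun e => Classical.choose (hmem e) with ho0
  have hv0 : valid (ES H) o0 := fun e _ => Classical.choose_spec (hmem e)
  -- discrepancy set
  have main : ∀ (N : ℕ) (o : Sym2 V → V), valid (ES H) o →
      (Finset.univ.filter (fun v => ((cnt (ES H) o v : ZMod 2)) ≠ b v)).card ≤ N →
      ∃ o', valid (ES H) o' ∧ ∀ v, ((cnt (ES H) o' v : ZMod 2)) = b v := by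
    intro N
    induction N with
    | zero =>
      intro o hvo hcard
      refine ⟨o, hvo, fun v => ?_⟩
      by_contra hne
      have : v ∈ Finset.univ.filter (fun v => ((cnt (ES H) o v : ZMod 2)) ≠ b v) := by
        simp [hne]
      have := Finset.card_pos.mpr ⟨v, this⟩
      omega
    | succ N ih =>
      intro o hvo hcard
      set D := Finset.univ.filter (fun v => ((cnt (ES H) o v : ZMod 2)) ≠ b v) with hD
      by_cases hDe : D = ∅
      · refine ⟨o, hvo, fun v => ?_⟩
        by_contra hne
        have : v ∈ D := by simp [hD, hne]
        simp [hDe] at this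
      -- D has even cardinality
      have hsum2 : ∑ v, ((cnt (ES H) o v : ZMod 2) - b v) = 0 := by
        rw [Finset.sum_sub_distrib, hsum, ← Nat.cast_sum, sum_cnt, sub_self]
      have hterm : ∀ v, ((cnt (ES H) o v : ZMod 2) - b v) = if v ∈ D then 1 else 0 := by
        intro v
        by_cases hv : v ∈ D
        · rw [if_pos hv]
          have hne : ((cnt (ES H) o v : ZMod 2)) ≠ b v := by
            simpa [hD] using hv
          rcases zmod2_cases ((cnt (ES H) o v : ZMod 2)) with h1 | h1 <;>
            rcases zmod2_cases (b v) with h2 | h2 <;>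
            rw [h1, h2] <;> first | decide | (exfalso; rw [h1, h2] at hne; exact hne rfl)
        · rw [if_neg hv]
          have heq : ((cnt (ES H) o v : ZMod 2)) = b v := by
            by_contra hne
            exact hv (by simp [hD, hne])
          rw [heq, sub_self]
      have hDcard : ((D.card : ZMod 2)) = 0 := by
        calc ((D.card : ZMod 2)) = ∑ v ∈ D, (1 : ZMod 2) := by
              rw [Finset.sum_const, nsmul_eq_mul, mul_one]
          _ = ∑ v, ((cnt (ES H) o v : ZMod 2) - b v) := by
              rw [Finset.sum_congr rfl (fun v hv => ((hterm v).trans (if_pos hv)).symm)]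
              rw [← Finset.sum_subset (Finset.subset_univ D)
                (fun v _ hv => (hterm v).trans (if_neg hv))]
          _ = 0 := hsum2
      have hDeven : Even D.card := (cast_zero_iff_even _).mp hDcard
      obtain ⟨u, hu⟩ := Finset.nonempty_iff_ne_empty.mpr hDe
      have hD2 : 2 ≤ D.card := by
        rcases hDeven with ⟨k, hk⟩
        have : 0 < D.card := Finset.card_pos.mpr ⟨u, hu⟩
        omega
      obtain ⟨w, hw, hwu⟩ : ∃ w ∈ D, w ≠ u := by
        by_contra hno
        push_neg at hno
        have : D ⊆ {u} := fun x hx => Finset.mem_singleton.mpr (hno x hx)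
        have := Finset.card_le_card this
        simp at this
        omega
      -- u, w are in the support
      have hsup : ∀ x ∈ D, x ∈ H.support := by
        intro x hx
        by_contra hxs
        have h1 : cnt (ES H) o x = 0 := cnt_eq_zero_of_not_support hvo hxs
        have h2 : b x = 0 := hb0 x hxs
        have : ((cnt (ES H) o x : ZMod 2)) ≠ b x := by simpa [hD] using hx
        rw [h1, h2] at this
        exact this (by norm_num)
      -- get a path from u to w
      obtain ⟨wk⟩ := hec u w (hsup u hu) (hsup w hw)
      set p := wk.toPath.val with hp
      have hpath : p.IsPath := wk.toPath.property
      have hnodup : p.edges.Nodup := hpath.isTrail.edges_nodup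
      have hsubES : p.edges.toFinset ⊆ ES H := by
        intro e he
        rw [List.mem_toFinset] at he
        exact mem_ES.mpr (p.edges_subset_edgeSet he)
      have hdiag : ∀ e ∈ ES H, ¬ e.IsDiag := fun e he =>
        H.not_isDiag_of_mem_edgeSet (mem_ES.mp he)
      set o' := flip p.edges.toFinset o with ho'
      have hvo' : valid (ES H) o' := valid_flip hvo
      have hcnt' : ∀ v, ((cnt (ES H) o' v : ZMod 2))
          = (cnt (ES H) o v : ZMod 2) + ((if v = u then 1 else 0) + (if v = w then 1 else 0)) := by
        intro v
        rw [ho', flip_parity hvo hdiag hsubES v]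
        congr 1
        rw [nodup_filter_card hnodup (fun e => v ∈ e)]
        exact walk_countP v p
      -- new discrepancy set
      have hD' : (Finset.univ.filter (fun v => ((cnt (ES H) o' v : ZMod 2)) ≠ b v))
          = D \ {u, w} := by
        ext v
        simp only [Finset.mem_filter, Finset.mem_univ, true_and, Finset.mem_sdiff,
          Finset.mem_insert, Finset.mem_singleton]
        rw [hcnt']
        have hDmem : ∀ x, x ∈ D ↔ ((cnt (ES H) o x : ZMod 2)) ≠ b x := by
          intro x; simp [hD]
        by_cases hvu : v = u <;> by_cases hvw : v = w
        · exact absurd (hvu.symm.trans hvw) hwu.symm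
        · rw [if_pos hvu, if_neg hvw, add_zero]
          have h1 : ((cnt (ES H) o v : ZMod 2)) + 1 = b v :=
            (zmod2_add_one_eq_iff _ _).mpr ((hDmem v).mp (hvu ▸ hu))
          constructor
          · intro hne; exact absurd h1 hne
          · rintro ⟨-, h2⟩; exact absurd (Or.inl hvu) h2
        · rw [if_neg hvu, if_pos hvw, zero_add]
          have h1 : ((cnt (ES H) o v : ZMod 2)) + 1 = b v :=
            (zmod2_add_one_eq_iff _ _).mpr ((hDmem v).mp (hvw ▸ hw))
          constructor
          · intro hne; exact absurd h1 hne
          · rintro ⟨-, h2⟩; exact absurd (Or.inr hvw) h2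
        · rw [if_neg hvu, if_neg hvw, add_zero, add_zero]
          rw [← hDmem v]
          constructor
          · intro h1; exact ⟨h1, fun hor => hor.elim hvu hvw⟩
          · rintro ⟨h1, -⟩; exact h1
      have hcard' : (Finset.univ.filter (fun v => ((cnt (ES H) o' v : ZMod 2)) ≠ b v)).card ≤ N := by
        rw [hD']
        have h1 : ({u, w} : Finset V) ⊆ D := by
          intro x hx
          rcases Finset.mem_insert.mp hx with rfl | hx
          · exact hu
          · exact (Finset.mem_singleton.mp hx) ▸ hw
        rw [Finset.card_sdiff_of_subset h1]
        have : ({u, w} : Finset V).card = 2 := by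
          rw [Finset.card_insert_of_notMem (by simp [hwu]; exact fun h => hwu h.symm),
            Finset.card_singleton]
        omega
      exact ih o' hvo' hcard'
  exact main _ o0 hv0 (le_refl _)



lemma two_cycle_edges {H : SimpleGraph V} {u0 : V} {c : H.Walk u0 u0} (hc : c.IsCycle)
    {a : V} (ha : a ∈ c.support) :
    ∃ e₁ e₂, e₁ ∈ c.edges ∧ e₂ ∈ c.edges ∧ e₁ ≠ e₂ ∧ a ∈ e₁ ∧ a ∈ e₂ := by
  set c' := c.rotate a ha with hc'
  have hc'cyc : c'.IsCycle := hc.rotate ha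
  have hrot : c'.edges ~r c.edges := c.rotate_edges a ha
  have hmemiff : ∀ e, e ∈ c'.edges ↔ e ∈ c.edges := fun e => hrot.mem_iff
  have hnn : ¬ c'.Nil := hc'cyc.not_nil
  obtain ⟨v₁, hadj, q, hq⟩ := SimpleGraph.Walk.not_nil_iff.mp hnn
  have hnodup : c'.edges.Nodup := hc'cyc.edges_nodup
  have hlen : 3 ≤ c'.length := hc'cyc.three_le_length
  -- first edge
  have he₁ : s(a, v₁) ∈ c'.edges := by rw [hq]; simp
  -- q has length ≥ 2, so q is not nil; get last edge of q via reversal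
  have hqlen : 2 ≤ q.length := by
    have : c'.length = q.length + 1 := by rw [hq]; simp
    omega
  have hqnn : ¬ q.reverse.Nil := by
    rw [SimpleGraph.Walk.nil_iff_length_eq]
    rw [SimpleGraph.Walk.length_reverse]
    omega
  obtain ⟨w₁, hadj2, q2, hq2⟩ := SimpleGraph.Walk.not_nil_iff.mp hqnn
  have he₂q : s(a, w₁) ∈ q.edges := by
    have : s(a, w₁) ∈ q.reverse.edges := by rw [hq2]; simp
    rwa [SimpleGraph.Walk.edges_reverse, List.mem_reverse] at this
  have he₂ : s(a, w₁) ∈ c'.edges := by rw [hq]; simp [he₂q]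
  have hne : s(a, v₁) ≠ s(a, w₁) := by
    intro heq
    have : s(a, v₁) ∉ q.edges := by
      have := hnodup
      rw [hq] at this
      simp only [SimpleGraph.Walk.edges_cons, List.nodup_cons] at this
      exact this.1
    rw [heq] at this
    exact this he₂q
  exact ⟨s(a, v₁), s(a, w₁), (hmemiff _).mp he₁, (hmemiff _).mp he₂, hne, by simp, by simp⟩


lemma support_of_reachable {H : SimpleGraph V} {x y : V}
    (h : H.Reachable x y) (hx : x ∈ H.support) : y ∈ H.support := by
  obtain ⟨w⟩ := h
  by_cases hnil : w.reverse.Nil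
  · rw [SimpleGraph.Walk.nil_iff_length_eq, SimpleGraph.Walk.length_reverse] at hnil
    exact (SimpleGraph.Walk.eq_of_length_eq_zero hnil) ▸ hx
  · obtain ⟨u, hadj, -, -⟩ := SimpleGraph.Walk.not_nil_iff.mp hnil
    exact ⟨u, hadj⟩

lemma mem_support_of_mem_edges {H : SimpleGraph V} {x y : V} {w : H.Walk x y}
    {e : Sym2 V} (he : e ∈ w.edges) {z : V} (hz : z ∈ e) : z ∈ w.support := by
  induction e with
  | _ p q =>
    rw [Sym2.mem_iff] at hz
    rcases hz with rfl | rfl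
    · exact w.fst_mem_support_of_mem_edges he
    · exact w.snd_mem_support_of_mem_edges he

lemma exists_attach {H : SimpleGraph V}
    (hec : ∀ x y, x ∈ H.support → y ∈ H.support → H.Reachable x y)
    {u0 : V} {c : H.Walk u0 u0} (hc : c.IsCycle) (hlen : Even c.length)
    (hoddE : Odd (ES H).card) :
    ∃ a p, a ∈ c.support ∧ p ∈ ES H ∧ p ∉ c.edges ∧ a ∈ p := by
  by_contra hno
  push_neg at hno
  have hclosed : ∀ p ∈ ES H, ∀ a ∈ c.support, a ∈ p → p ∈ c.edges := by
    intro p hp a ha hap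
    by_contra hpc
    exact hno a p ha hp hpc hap
  have hu0s : u0 ∈ H.support := by
    obtain ⟨v₁, hadj, -, -⟩ := SimpleGraph.Walk.not_nil_iff.mp hc.not_nil
    exact ⟨v₁, hadj⟩
  have hclaim : ∀ (x y : V) (w : H.Walk x y), x ∈ c.support → y ∈ c.support := by
    intro x y w
    induction w with
    | nil => exact id
    | @cons x z y h q ih =>
      intro hx
      have hpe : s(x, z) ∈ ES H := mem_ES.mpr ((SimpleGraph.mem_edgeSet H).mpr h)
      have : s(x, z) ∈ c.edges := hclosed _ hpe x hx (by simp)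
      exact ih (c.snd_mem_support_of_mem_edges this)
  have hall : ES H = c.edges.toFinset := by
    apply Finset.Subset.antisymm
    · intro e he
      rw [List.mem_toFinset]
      have hne : ∃ x, x ∈ e ∧ x ∈ H.support := by
        induction e with
        | _ x y =>
          exact ⟨x, by simp, ⟨y, (SimpleGraph.mem_edgeSet H).mp (mem_ES.mp he)⟩⟩
      obtain ⟨x, hxe, hxs⟩ := hne
      obtain ⟨w⟩ := hec u0 x hu0s hxs
      have hxc : x ∈ c.support := hclaim u0 x w c.start_mem_support
      exact hclosed e he x hxc hxe
    · intro e he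
      rw [List.mem_toFinset] at he
      exact mem_ES.mpr (c.edges_subset_edgeSet he)
  have hcard : (ES H).card = c.length := by
    rw [hall, List.card_toFinset, hc.edges_nodup.dedup, SimpleGraph.Walk.length_edges]
  rw [hcard] at hoddE
  exact (Nat.not_odd_iff_even.mpr hlen) hoddE

def comp (H' : SimpleGraph V) (r : V) : SimpleGraph V where
  Adj x y := H'.Adj x y ∧ H'.Reachable x r
  symm := ⟨by
    intro x y ⟨hadj, hr⟩
    exact ⟨hadj.symm, (hadj.symm.reachable).trans hr⟩⟩
  loopless := ⟨fun x ⟨hadj, _⟩ => H'.loopless.irrefl x hadj⟩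

lemma comp_le {H' : SimpleGraph V} {r : V} : comp H' r ≤ H' := fun _ _ h => h.1

lemma comp_edge_iff {H' : SimpleGraph V} {r : V} {e : Sym2 V} :
    e ∈ (comp H' r).edgeSet ↔ e ∈ H'.edgeSet ∧ ∀ x ∈ e, H'.Reachable x r := by
  induction e with
  | _ x y =>
    rw [SimpleGraph.mem_edgeSet, SimpleGraph.mem_edgeSet]
    constructor
    · rintro ⟨hadj, hr⟩
      refine ⟨hadj, ?_⟩
      intro z hz
      rw [Sym2.mem_iff] at hz
      rcases hz with rfl | rfl
      · exact hr
      · exact (hadj.symm.reachable).trans hr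
    · rintro ⟨hadj, hall⟩
      exact ⟨hadj, hall x (by simp)⟩

lemma reach_comp {H' : SimpleGraph V} {r x : V} (h : H'.Reachable x r) :
    (comp H' r).Reachable x r := by
  obtain ⟨w⟩ := h
  have hw : ∀ e ∈ w.edges, e ∈ (comp H' r).edgeSet := by
    intro e he
    rw [comp_edge_iff]
    refine ⟨w.edges_subset_edgeSet he, ?_⟩
    intro z hz
    have hzs : z ∈ w.support := mem_support_of_mem_edges he hz
    exact ⟨w.dropUntil z hzs⟩
  exact ⟨w.transfer (comp H' r) hw⟩

lemma comp_support_reach {H' : SimpleGraph V} {r x : V}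
    (h : x ∈ (comp H' r).support) : H'.Reachable x r := by
  obtain ⟨y, hadj⟩ := h
  exact hadj.2

lemma hec_comp {H' : SimpleGraph V} {r : V} :
    ∀ x y, x ∈ (comp H' r).support → y ∈ (comp H' r).support →
      (comp H' r).Reachable x y := by
  intro x y hx hy
  exact (reach_comp (comp_support_reach hx)).trans (reach_comp (comp_support_reach hy)).symm

lemma dichotomy {H : SimpleGraph V} {a b₂ : V} :
    ∀ {x y : V} (w : H.Walk x y),
      ((H.deleteEdges {s(a,b₂)}).Reachable y a ∨ (H.deleteEdges {s(a,b₂)}).Reachable y b₂) →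
      ((H.deleteEdges {s(a,b₂)}).Reachable x a ∨ (H.deleteEdges {s(a,b₂)}).Reachable x b₂) := by
  intro x y w
  induction w with
  | nil => exact id
  | @cons x z y h q ih =>
    intro hy
    have hz := ih hy
    by_cases heq : s(x, z) = s(a, b₂)
    · rw [Sym2.eq_iff] at heq
      rcases heq with ⟨rfl, rfl⟩ | ⟨rfl, rfl⟩
      · exact Or.inl (SimpleGraph.Reachable.refl _)
      · exact Or.inr (SimpleGraph.Reachable.refl _)
    · have hadj : (H.deleteEdges {s(a,b₂)}).Adj x z := by
        rw [SimpleGraph.deleteEdges_adj]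
        exact ⟨h, by simpa using heq⟩
      rcases hz with hz | hz
      · exact Or.inl ((hadj.reachable).trans hz)
      · exact Or.inr ((hadj.reachable).trans hz)

open Classical in
lemma cycle_flip_keep {H : SimpleGraph V} {u0 : V} {c : H.Walk u0 u0} (hc : c.IsCycle)
    (hce : ∀ e ∈ c.edges, e ∈ ES H)
    {o : Sym2 V → V} (hvo : valid (ES H) o) (v : V) :
    ((cnt (ES H) (flip c.edges.toFinset o) v : ZMod 2)) = (cnt (ES H) o v : ZMod 2) := by
  have hdiag : ∀ e ∈ ES H, ¬ e.IsDiag := fun e he =>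
    H.not_isDiag_of_mem_edgeSet (mem_ES.mp he)
  have hsub : c.edges.toFinset ⊆ ES H := fun e he => hce e (List.mem_toFinset.mp he)
  rw [flip_parity hvo hdiag hsub v, nodup_filter_card hc.edges_nodup (fun e => v ∈ e),
    walk_countP v c]
  by_cases h : v = u0 <;> simp [h] <;> decide

open Classical in
lemma finishOdd {H : SimpleGraph V} {u0 : V} {c : H.Walk u0 u0} (hc : c.IsCycle)
    (hce : ∀ e ∈ c.edges, e ∈ ES H)
    {a : V} (ha : a ∈ c.support)
    {o : Sym2 V → V} (hvo : valid (ES H) o)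
    {r : Sym2 V} (hr : r ∈ ES H) (hra : o r = a) (hrc : r ∉ c.edges)
    (hodd : (cnt (ES H) o a : ZMod 2) = 1)
    (hev : ∀ v, v ≠ a → (cnt (ES H) o v : ZMod 2) = 0) :
    ∃ o', valid (ES H) o' ∧ (∀ v, v ≠ a → (cnt (ES H) o' v : ZMod 2) = 0) ∧
      (cnt (ES H) o' a : ZMod 2) = 1 ∧ 3 ≤ cnt (ES H) o' a := by
  by_cases h3 : 3 ≤ cnt (ES H) o a
  · exact ⟨o, hvo, hev, hodd, h3⟩
  have hoddn : Odd (cnt (ES H) o a) := (cast_one_iff_odd _).mp hodd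
  have h1 : cnt (ES H) o a = 1 := by
    rcases hoddn with ⟨k, hk⟩
    omega
  have hFr : r ∈ (ES H).filter (fun e => o e = a) := Finset.mem_filter.mpr ⟨hr, hra⟩
  have hF : (ES H).filter (fun e => o e = a) = {r} := by
    have hcard : ((ES H).filter (fun e => o e = a)).card = 1 := h1
    obtain ⟨x, hx⟩ := Finset.card_eq_one.mp hcard
    rw [hx] at hFr ⊢
    rw [Finset.mem_singleton.mp hFr]
  set o' := flip c.edges.toFinset o with ho'
  have hvo' : valid (ES H) o' := valid_flip hvo
  have hkeep : ∀ v, ((cnt (ES H) o' v : ZMod 2)) = (cnt (ES H) o v : ZMod 2) :=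
    cycle_flip_keep hc hce hvo
  refine ⟨o', hvo', fun v hv => (hkeep v).trans (hev v hv), (hkeep a).trans hodd, ?_⟩
  obtain ⟨e₁, e₂, he₁, he₂, hne, ha₁, ha₂⟩ := two_cycle_edges hc ha
  have hoe : ∀ e, e ∈ c.edges → a ∈ e → o' e = a := by
    intro e hec' hae
    have heES : e ∈ ES H := hce e hec'
    have hoa : o e ≠ a := by
      intro heq
      have : e ∈ (ES H).filter (fun e => o e = a) := Finset.mem_filter.mpr ⟨heES, heq⟩
      rw [hF, Finset.mem_singleton] at this
      exact hrc (this ▸ hec')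
    have : o' e = oth e (o e) := by
      rw [ho']; unfold flip; rw [if_pos (List.mem_toFinset.mpr hec')]
    rw [this]
    exact oth_eq (hvo e heES) hae (fun h => hoa h.symm)
  have hsubset : ({r, e₁, e₂} : Finset (Sym2 V)) ⊆ (ES H).filter (fun e => o' e = a) := by
    intro x hx
    simp only [Finset.mem_insert, Finset.mem_singleton] at hx
    rcases hx with rfl | rfl | rfl
    · refine Finset.mem_filter.mpr ⟨hr, ?_⟩
      rw [ho']; unfold flip; rw [if_neg (fun h => hrc (List.mem_toFinset.mp h))]
      exact hra
    · exact Finset.mem_filter.mpr ⟨hce _ he₁, hoe _ he₁ ha₁⟩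
    · exact Finset.mem_filter.mpr ⟨hce _ he₂, hoe _ he₂ ha₂⟩
  have hr1 : r ≠ e₁ := fun h => hrc (h ▸ he₁)
  have hr2 : r ≠ e₂ := fun h => hrc (h ▸ he₂)
  have hc3 : ({r, e₁, e₂} : Finset (Sym2 V)).card = 3 := by
    rw [Finset.card_insert_of_notMem (by simp [hr1, hr2]),
      Finset.card_insert_of_notMem (by simp [hne]), Finset.card_singleton]
  calc 3 = ({r, e₁, e₂} : Finset (Sym2 V)).card := hc3.symm
    _ ≤ _ := Finset.card_le_card hsubset

open Classical in
lemma cnt_combine {s t : Finset (Sym2 V)} {p : Sym2 V} (hst : Disjoint s t)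
    (hp1 : p ∉ s) (hp2 : p ∉ t) (oA oB : Sym2 V → V) (w : V) (v : V) :
    cnt (insert p (s ∪ t)) (fun e => if e ∈ s then oA e else if e ∈ t then oB e else w) v
      = cnt s oA v + cnt t oB v + (if w = v then 1 else 0) := by
  set o : Sym2 V → V := fun e => if e ∈ s then oA e else if e ∈ t then oB e else w with hoo
  have hop : o p = w := by simp [hoo, hp1, hp2]
  have h1 : cnt (s ∪ t) o v = cnt s oA v + cnt t oB v := by
    rw [cnt_union hst]
    congr 1
    · exact cnt_congr (fun e he => by simp [hoo, he]) v
    · refine cnt_congr (fun e he => ?_) v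
      have hes : e ∉ s := Finset.disjoint_right.mp hst he
      simp [hoo, he, hes]
  have hpu : p ∉ s ∪ t := by simp [hp1, hp2]
  unfold cnt at h1 ⊢
  rw [Finset.filter_insert]
  by_cases h : o p = v
  · rw [if_pos h, Finset.card_insert_of_notMem (fun hm => hpu (Finset.mem_of_mem_filter p hm)),
      if_pos (hop.symm.trans h : w = v)]
    omega
  · rw [if_neg h, if_neg (fun hwv => h (hop.trans hwv))]
    omega

lemma comp_support_disj {H' : SimpleGraph V} {a b₂ : V} (hbr : ¬ H'.Reachable a b₂) :
    ∀ x, x ∈ (comp H' a).support → x ∈ (comp H' b₂).support → False :=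
  fun _ hx hy => hbr ((comp_support_reach hx).symm.trans (comp_support_reach hy))

open Classical in
lemma support_of_cnt_pos {H : SimpleGraph V} {o : Sym2 V → V} (hvo : valid (ES H) o) {v : V}
    (h : 0 < cnt (ES H) o v) : v ∈ H.support := by
  obtain ⟨e, he⟩ := Finset.card_pos.mp h
  rw [Finset.mem_filter] at he
  exact mem_support_of_edge (mem_ES.mp he.1) (he.2 ▸ hvo e he.1)

lemma cycle_reach {H : SimpleGraph V} {u0 : V} {c : H.Walk u0 u0} {p : Sym2 V}
    (hpc : p ∉ c.edges) {z a : V} (hz : z ∈ c.support) (hac : a ∈ c.support) :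
    (H.deleteEdges {p}).Reachable z a := by
  set w := (c.dropUntil z hz).append (c.takeUntil a hac) with hw
  have hsubc : ∀ e ∈ w.edges, e ∈ c.edges := by
    intro e he
    rw [hw, SimpleGraph.Walk.edges_append, List.mem_append] at he
    rcases he with he | he
    · exact c.edges_dropUntil_subset hz he
    · exact c.edges_takeUntil_subset hac he
  have hsub : ∀ e ∈ w.edges, e ∈ (H.deleteEdges {p}).edgeSet := by
    intro e he
    rw [SimpleGraph.edgeSet_deleteEdges]
    refine ⟨w.edges_subset_edgeSet he, ?_⟩
    intro hep
    rw [Set.mem_singleton_iff] at hep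
    exact hpc (hep ▸ hsubc e he)
  exact ⟨w.transfer _ hsub⟩

open Classical in
lemma odd_main : ∀ (n : ℕ) (H : SimpleGraph V), (ES H).card ≤ n →
    (∀ x y, x ∈ H.support → y ∈ H.support → H.Reachable x y) →
    (∃ (u : V) (c : H.Walk u u), c.IsCycle ∧ Even c.length) →
    Odd (ES H).card →
    ∃ o a, valid (ES H) o ∧ (∀ v, v ≠ a → (cnt (ES H) o v : ZMod 2) = 0) ∧
      (cnt (ES H) o a : ZMod 2) = 1 ∧ 3 ≤ cnt (ES H) o a := by
  intro n
  induction n with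
  | zero =>
    intro H hcard _ _ hodd
    rcases hodd with ⟨k, hk⟩
    omega
  | succ n ih =>
    intro H hcard hec hcyc hodd
    obtain ⟨u0, c, hc, hlen⟩ := hcyc
    have hce : ∀ e ∈ c.edges, e ∈ ES H := fun e he => mem_ES.mpr (c.edges_subset_edgeSet he)
    obtain ⟨a, p, hac, hpES, hpc, hap⟩ := exists_attach hec hc hlen hodd
    have hpE : p ∈ H.edgeSet := mem_ES.mp hpES
    have hdiagp : ¬ p.IsDiag := H.not_isDiag_of_mem_edgeSet hpE
    set b₂ := oth p a with hb₂
    have hb₂p : b₂ ∈ p := oth_mem hap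
    have hb₂a : b₂ ≠ a := oth_ne hdiagp hap
    have hps : s(a, b₂) = p := by
      rw [hb₂, oth, dif_pos hap]; exact Sym2.other_spec' hap
    have haS : a ∈ H.support := mem_support_of_edge hpE hap
    have hH'sub : ∀ {e : Sym2 V}, e ∈ H.edgeSet → e ≠ p → e ∈ (H.deleteEdges {p}).edgeSet := by
      intro e he hne
      rw [SimpleGraph.edgeSet_deleteEdges]
      exact ⟨he, fun hm => hne (Set.mem_singleton_iff.mp hm)⟩
    have hH'le : ∀ {e : Sym2 V}, e ∈ (H.deleteEdges {p}).edgeSet → e ∈ H.edgeSet := by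
      intro e he
      rw [SimpleGraph.edgeSet_deleteEdges] at he
      exact he.1
    have hpH' : p ∉ (H.deleteEdges {p}).edgeSet := by
      rw [SimpleGraph.edgeSet_deleteEdges]
      exact fun hm => hm.2 rfl
    have hdiag : ∀ e ∈ ES H, ¬ e.IsDiag := fun e he =>
      H.not_isDiag_of_mem_edgeSet (mem_ES.mp he)
    by_cases hbr : (H.deleteEdges {p}).Reachable a b₂
    · -- p is not a bridge
      obtain ⟨o, hvo, hb⟩ := exists_orient H hec (fun v => if v = a then 1 else 0)
        (fun v hv => if_neg (fun h => hv (by rw [h]; exact haS)))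
        (by
          rw [Finset.sum_ite_eq' Finset.univ a (fun _ => (1 : ZMod 2)),
            if_pos (Finset.mem_univ a)]
          exact ((cast_one_iff_odd _).mpr hodd).symm)
      have hodd_a : (cnt (ES H) o a : ZMod 2) = 1 := (hb a).trans (if_pos rfl)
      have hev : ∀ v, v ≠ a → (cnt (ES H) o v : ZMod 2) = 0 :=
        fun v hv => (hb v).trans (if_neg hv)
      by_cases hpo : o p = a
      · obtain ⟨o', h1, h2, h3, h4⟩ := finishOdd hc hce hac hvo hpES hpo hpc hodd_a hev
        exact ⟨o', a, h1, h2, h3, h4⟩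
      · have hpo2 : o p = b₂ := (mem_cases hap (hvo p hpES)).resolve_left hpo
        obtain ⟨q0⟩ := hbr.symm
        set q := q0.toPath.val with hq
        have hqp : q.IsPath := q0.toPath.2
        have hqH' : ∀ e ∈ q.edges, e ∈ (H.deleteEdges {p}).edgeSet :=
          fun e he => q.edges_subset_edgeSet he
        have hqES : ∀ e ∈ q.edges.toFinset, e ∈ ES H :=
          fun e he => mem_ES.mpr (hH'le (hqH' e (List.mem_toFinset.mp he)))
        have hpq : p ∉ q.edges.toFinset :=
          fun hm => hpH' (hqH' p (List.mem_toFinset.mp hm))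
        have htsub : insert p q.edges.toFinset ⊆ ES H := by
          intro e he
          rcases Finset.mem_insert.mp he with rfl | he2
          · exact hpES
          · exact hqES e he2
        have hvp_iff : ∀ v, v ∈ p ↔ v = a ∨ v = b₂ := by
          intro v
          rw [← hps]
          simp [Sym2.mem_iff]
        have hpar : ∀ v, (cnt (ES H) (flip (insert p q.edges.toFinset) o) v : ZMod 2)
            = (cnt (ES H) o v : ZMod 2) := by
          intro v
          rw [flip_parity hvo hdiag htsub v]
          have hsplit : ((insert p q.edges.toFinset).filter (fun e => v ∈ e)).card
              = (if v ∈ p then 1 else 0)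
                + (q.edges.toFinset.filter (fun e => v ∈ e)).card := by
            rw [Finset.filter_insert]
            by_cases hvp : v ∈ p
            · rw [if_pos hvp, if_pos hvp,
                Finset.card_insert_of_notMem (fun hm => hpq (Finset.mem_of_mem_filter p hm))]
              omega
            · rw [if_neg hvp, if_neg hvp]
              omega
          rw [hsplit, nodup_filter_card hqp.isTrail.edges_nodup (fun e => v ∈ e), Nat.cast_add]
          rw [walk_countP v q]
          by_cases h1 : v = a <;> by_cases h2 : v = b₂
          · exact absurd (h2.symm.trans h1) hb₂a
          · rw [if_pos (by rw [hvp_iff]; exact Or.inl h1), if_neg h2, if_pos h1]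
            have : ((1 : ℕ) : ZMod 2) + ((0 : ZMod 2) + 1) = 0 := by decide
            rw [this, add_zero]
          · rw [if_pos (by rw [hvp_iff]; exact Or.inr h2), if_pos h2, if_neg h1]
            have : ((1 : ℕ) : ZMod 2) + ((1 : ZMod 2) + 0) = 0 := by decide
            rw [this, add_zero]
          · rw [if_neg (by rw [hvp_iff]; rintro (h | h); exacts [h1 h, h2 h]),
              if_neg h2, if_neg h1]
            have : ((0 : ℕ) : ZMod 2) + ((0 : ZMod 2) + 0) = 0 := by decide
            rw [this, add_zero]
        have hvo₁ : valid (ES H) (flip (insert p q.edges.toFinset) o) := valid_flip hvo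
        have hp₁ : flip (insert p q.edges.toFinset) o p = a := by
          unfold flip
          rw [if_pos (Finset.mem_insert_self p _), hpo2]
          exact oth_eq hb₂p hap (fun h => hb₂a h.symm)
        obtain ⟨o', h1, h2, h3, h4⟩ := finishOdd hc hce hac hvo₁ hpES hp₁ hpc
          ((hpar a).trans hodd_a) (fun v hv => (hpar v).trans (hev v hv))
        exact ⟨o', a, h1, h2, h3, h4⟩
    · -- p is a bridge
      have hAle : ∀ {e : Sym2 V}, e ∈ ES (comp (H.deleteEdges {p}) a) → e ∈ ES H :=
        fun he => mem_ES.mpr (hH'le (comp_edge_iff.mp (mem_ES.mp he)).1)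
      have hBle : ∀ {e : Sym2 V}, e ∈ ES (comp (H.deleteEdges {p}) b₂) → e ∈ ES H :=
        fun he => mem_ES.mpr (hH'le (comp_edge_iff.mp (mem_ES.mp he)).1)
      have hpA : p ∉ ES (comp (H.deleteEdges {p}) a) :=
        fun h => hpH' (comp_edge_iff.mp (mem_ES.mp h)).1
      have hpB : p ∉ ES (comp (H.deleteEdges {p}) b₂) :=
        fun h => hpH' (comp_edge_iff.mp (mem_ES.mp h)).1
      have hdisjAB : Disjoint (ES (comp (H.deleteEdges {p}) a)) (ES (comp (H.deleteEdges {p}) b₂)) := by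
        rw [Finset.disjoint_left]
        intro e heA heB
        have h1 := comp_edge_iff.mp (mem_ES.mp heA)
        have h2 := comp_edge_iff.mp (mem_ES.mp heB)
        obtain ⟨x, hx⟩ : ∃ x, x ∈ e := ⟨e.out.1, Sym2.out_fst_mem e⟩
        exact hbr ((h1.2 x hx).symm.trans (h2.2 x hx))
      have hESH : ES H = insert p (ES (comp (H.deleteEdges {p}) a) ∪ ES (comp (H.deleteEdges {p}) b₂)) := by
        apply Finset.Subset.antisymm
        · intro e he
          by_cases hep : e = p
          · rw [hep]; exact Finset.mem_insert_self p _
          · apply Finset.mem_insert_of_mem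
            rw [Finset.mem_union]
            have heH' : e ∈ (H.deleteEdges {p}).edgeSet := hH'sub (mem_ES.mp he) hep
            have heH : e ∈ H.edgeSet := mem_ES.mp he
            clear hep
            induction e with
            | _ x y =>
              have hadj' : (H.deleteEdges {p}).Adj x y := heH'
              have hxS : x ∈ H.support := ⟨y, heH⟩
              have hyS : y ∈ H.support := ⟨x, (heH : H.Adj x y).symm⟩
              obtain ⟨wx⟩ := hec x a hxS haS
              have hdx := dichotomy (a := a) (b₂ := b₂) wx (Or.inl (SimpleGraph.Reachable.refl _))
              obtain ⟨wy⟩ := hec y a hyS haS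
              have hdy := dichotomy (a := a) (b₂ := b₂) wy (Or.inl (SimpleGraph.Reachable.refl _))
              rw [hps] at hdx hdy
              have memlem : ∀ z w : V, z ∈ s(x, y) → (z = x ∨ z = y) := by
                intro z w hz
                rwa [Sym2.mem_iff] at hz
              rcases hdx with hdx | hdx <;> rcases hdy with hdy | hdy
              · left
                refine mem_ES.mpr (comp_edge_iff.mpr ⟨heH', ?_⟩)
                intro z hz
                rcases Sym2.mem_iff.mp hz with rfl | rfl
                exacts [hdx, hdy]
              · exact absurd (hdx.symm.trans ((hadj'.reachable).trans hdy)) hbr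
              · exact absurd (hdy.symm.trans ((hadj'.symm.reachable).trans hdx)) hbr
              · right
                refine mem_ES.mpr (comp_edge_iff.mpr ⟨heH', ?_⟩)
                intro z hz
                rcases Sym2.mem_iff.mp hz with rfl | rfl
                exacts [hdx, hdy]
        · intro e he
          rcases Finset.mem_insert.mp he with rfl | he2
          · exact hpES
          · rcases Finset.mem_union.mp he2 with h | h
            exacts [hAle h, hBle h]
      have hpAB : p ∉ ES (comp (H.deleteEdges {p}) a) ∪ ES (comp (H.deleteEdges {p}) b₂) := by
        rw [Finset.mem_union]
        rintro (h | h)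
        exacts [hpA h, hpB h]
      have hcards : (ES H).card
          = (ES (comp (H.deleteEdges {p}) a)).card + (ES (comp (H.deleteEdges {p}) b₂)).card + 1 := by
        rw [hESH, Finset.card_insert_of_notMem hpAB, Finset.card_union_of_disjoint hdisjAB]
      -- the cycle lives in comp H' a
      have hcA : ∀ e ∈ c.edges, e ∈ (comp (H.deleteEdges {p}) a).edgeSet := by
        intro e he
        rw [comp_edge_iff]
        refine ⟨hH'sub (c.edges_subset_edgeSet he) (fun h => hpc (h ▸ he)), ?_⟩
        intro z hz
        exact cycle_reach hpc (mem_support_of_mem_edges he hz) hac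
      have hcardA_le : (ES (comp (H.deleteEdges {p}) a)).card ≤ n := by
        have hsub : ES (comp (H.deleteEdges {p}) a) ⊆ (ES H).erase p :=
          fun e he => Finset.mem_erase.mpr ⟨fun h => hpA (h ▸ he), hAle he⟩
        have := Finset.card_le_card hsub
        rw [Finset.card_erase_of_mem hpES] at this
        omega
      by_cases hAodd : Odd (ES (comp (H.deleteEdges {p}) a)).card
      · -- both components odd
        have hBodd : Odd (ES (comp (H.deleteEdges {p}) b₂)).card := by
          rcases hodd with ⟨k1, hk1⟩
          rcases hAodd with ⟨k2, hk2⟩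
          rcases Nat.even_or_odd (ES (comp (H.deleteEdges {p}) b₂)).card with ⟨k3, hk3⟩ | h
          · omega
          · exact h
        obtain ⟨oA, a', hvA, hevA, hoddA, h3A⟩ := ih (comp (H.deleteEdges {p}) a) hcardA_le
          hec_comp
          ⟨u0, c.transfer _ hcA, hc.transfer hcA, by rw [SimpleGraph.Walk.length_transfer]; exact hlen⟩
          hAodd
        have hb₂S : b₂ ∈ (comp (H.deleteEdges {p}) b₂).support := by
          have hpos : 0 < (ES (comp (H.deleteEdges {p}) b₂)).card := by
            rcases hBodd with ⟨k, hk⟩; omega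
          obtain ⟨eB, heB⟩ := Finset.card_pos.mp hpos
          obtain ⟨x, hx⟩ : ∃ x, x ∈ eB := ⟨eB.out.1, Sym2.out_fst_mem eB⟩
          have h1 := comp_edge_iff.mp (mem_ES.mp heB)
          have hxB : x ∈ (comp (H.deleteEdges {p}) b₂).support :=
            mem_support_of_edge (mem_ES.mp heB) hx
          exact support_of_reachable (reach_comp (h1.2 x hx)) hxB
        obtain ⟨oB, hvB, hbB⟩ := exists_orient (comp (H.deleteEdges {p}) b₂) hec_comp
          (fun v => if v = b₂ then 1 else 0)
          (fun v hv => if_neg (fun h => hv (by rw [h]; exact hb₂S)))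
          (by
            rw [Finset.sum_ite_eq' Finset.univ b₂ (fun _ => (1 : ZMod 2)),
              if_pos (Finset.mem_univ b₂)]
            exact ((cast_one_iff_odd _).mpr hBodd).symm)
        have hcnt := fun v => cnt_combine hdisjAB hpA hpB oA oB b₂ v
        rw [← hESH] at hcnt
        set o : Sym2 V → V := fun e => if e ∈ ES (comp (H.deleteEdges {p}) a) then oA e
          else if e ∈ ES (comp (H.deleteEdges {p}) b₂) then oB e else b₂ with ho
        have hvoH : valid (ES H) o := by
          intro e he
          rw [hESH] at he
          rcases Finset.mem_insert.mp he with rfl | he2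
          · rw [ho]
            simp only [if_neg hpA, if_neg hpB]
            exact hb₂p
          · rcases Finset.mem_union.mp he2 with h | h
            · rw [ho]; simp only [if_pos h]; exact hvA e h
            · have hnA : e ∉ ES (comp (H.deleteEdges {p}) a) := Finset.disjoint_right.mp hdisjAB h
              rw [ho]; simp only [if_neg hnA, if_pos h]; exact hvB e h
        have ha'S : a' ∈ (comp (H.deleteEdges {p}) a).support :=
          support_of_cnt_pos hvA (lt_of_lt_of_le (by norm_num) h3A)
        have hb₂a' : b₂ ≠ a' := fun h => comp_support_disj hbr a' ha'S (h ▸ hb₂S)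
        refine ⟨o, a', hvoH, ?_, ?_, ?_⟩
        · intro v hv
          rw [hcnt v]
          push_cast
          rw [hevA v hv]
          by_cases hvb : v = b₂
          · rw [hbB v, if_pos hvb, if_pos hvb.symm]
            decide
          · rw [hbB v, if_neg hvb, if_neg (fun h => hvb h.symm)]
            ring
        · rw [hcnt a']
          push_cast
          rw [hoddA, hbB a', if_neg (fun h => hb₂a' h.symm), if_neg hb₂a']
          decide
        · rw [hcnt a']
          have := h3A
          split_ifs <;> omega
      · -- both components even
        have hAeven : Even (ES (comp (H.deleteEdges {p}) a)).card := Nat.not_odd_iff_even.mp hAodd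
        have hBeven : Even (ES (comp (H.deleteEdges {p}) b₂)).card := by
          rcases hodd with ⟨k1, hk1⟩
          rcases hAeven with ⟨k2, hk2⟩
          rcases Nat.even_or_odd (ES (comp (H.deleteEdges {p}) b₂)).card with h | ⟨k3, hk3⟩
          · exact h
          · omega
        obtain ⟨oA, hvA, hbA⟩ := exists_orient (comp (H.deleteEdges {p}) a) hec_comp
          (fun _ => 0) (fun _ _ => rfl)
          (by
            rw [Finset.sum_const_zero]
            exact ((cast_zero_iff_even _).mpr hAeven).symm)
        obtain ⟨oB, hvB, hbB⟩ := exists_orient (comp (H.deleteEdges {p}) b₂) hec_comp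
          (fun _ => 0) (fun _ _ => rfl)
          (by
            rw [Finset.sum_const_zero]
            exact ((cast_zero_iff_even _).mpr hBeven).symm)
        have hcnt := fun v => cnt_combine hdisjAB hpA hpB oA oB a v
        rw [← hESH] at hcnt
        set o : Sym2 V → V := fun e => if e ∈ ES (comp (H.deleteEdges {p}) a) then oA e
          else if e ∈ ES (comp (H.deleteEdges {p}) b₂) then oB e else a with ho
        have hvoH : valid (ES H) o := by
          intro e he
          rw [hESH] at he
          rcases Finset.mem_insert.mp he with rfl | he2
          · rw [ho]
            simp only [if_neg hpA, if_neg hpB]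
            exact hap
          · rcases Finset.mem_union.mp he2 with h | h
            · rw [ho]; simp only [if_pos h]; exact hvA e h
            · have hnA : e ∉ ES (comp (H.deleteEdges {p}) a) := Finset.disjoint_right.mp hdisjAB h
              rw [ho]; simp only [if_neg hnA, if_pos h]; exact hvB e h
        have hpa : o p = a := by
          rw [ho]; simp only [if_neg hpA, if_neg hpB]
        have hodd_a : (cnt (ES H) o a : ZMod 2) = 1 := by
          rw [hcnt a]
          push_cast
          rw [hbA a, hbB a, if_pos rfl]
          push_cast
          ring
        have hev : ∀ v, v ≠ a → (cnt (ES H) o v : ZMod 2) = 0 := by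
          intro v hv
          rw [hcnt v]
          push_cast
          rw [hbA v, hbB v, if_neg (fun h => hv h.symm)]
          push_cast
          ring
        obtain ⟨o', h1, h2, h3, h4⟩ := finishOdd hc hce hac hvoH hpES hpa hpc hodd_a hev
        exact ⟨o', a, h1, h2, h3, h4⟩

lemma pairing {α : Type*} [DecidableEq α] : ∀ (n : ℕ) (s : Finset α), s.card ≤ n →
    Even s.card →
    ∃ P : Finset (Finset α), (∀ A ∈ P, A.card = 2 ∧ A ⊆ s) ∧
      (P : Set (Finset α)).PairwiseDisjoint id ∧ P.biUnion id = s := by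
  intro n
  induction n with
  | zero =>
    intro s hle he
    have : s = ∅ := Finset.card_eq_zero.mp (by omega)
    subst this
    exact ⟨∅, by simp, by simp, by simp⟩
  | succ n ih =>
    intro s hle he
    by_cases hs : s = ∅
    · subst hs
      exact ⟨∅, by simp, by simp, by simp⟩
    obtain ⟨x, hx⟩ := Finset.nonempty_iff_ne_empty.mpr hs
    have hcard2 : 2 ≤ s.card := by
      rcases he with ⟨k, hk⟩
      have : 0 < s.card := Finset.card_pos.mpr ⟨x, hx⟩
      omega
    have hne : (s.erase x).Nonempty := by
      rw [← Finset.card_pos, Finset.card_erase_of_mem hx]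
      omega
    obtain ⟨y, hy⟩ := hne
    have hyx : y ≠ x := Finset.ne_of_mem_erase hy
    have hys : y ∈ s := Finset.mem_of_mem_erase hy
    set s' := (s.erase x).erase y with hs'
    have hs'card : s'.card = s.card - 2 := by
      rw [hs', Finset.card_erase_of_mem hy, Finset.card_erase_of_mem hx]
      omega
    have hs'sub : s' ⊆ s := fun z hz =>
      Finset.mem_of_mem_erase (Finset.mem_of_mem_erase hz)
    have hxs' : x ∉ s' := fun h => (Finset.ne_of_mem_erase (Finset.mem_of_mem_erase h)) rfl
    have hys' : y ∉ s' := fun h => (Finset.ne_of_mem_erase h) rfl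
    obtain ⟨P', hP1, hP2, hP3⟩ := ih s' (by omega) (by
      rcases he with ⟨k, hk⟩
      exact ⟨k - 1, by omega⟩)
    refine ⟨insert {x, y} P', ?_, ?_, ?_⟩
    · intro A hA
      rcases Finset.mem_insert.mp hA with rfl | hA
      · constructor
        · rw [Finset.card_insert_of_notMem (by simp [hyx]; exact fun h => hyx h.symm),
            Finset.card_singleton]
        · intro z hz
          rcases Finset.mem_insert.mp hz with rfl | hz
          · exact hx
          · exact (Finset.mem_singleton.mp hz) ▸ hys
      · exact ⟨(hP1 A hA).1, (hP1 A hA).2.trans hs'sub⟩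
    · rw [Finset.coe_insert]
      refine Set.PairwiseDisjoint.insert ?_ ?_
      · exact hP2
      · intro A hA hne2
        rw [Finset.disjoint_left]
        intro z hz hzA
        have hzs' : z ∈ s' := (hP1 A hA).2 hzA
        rcases Finset.mem_insert.mp hz with rfl | hz
        · exact hxs' hzs'
        · exact hys' ((Finset.mem_singleton.mp hz) ▸ hzs')
    · rw [Finset.biUnion_insert, hP3]
      ext z
      simp only [Finset.mem_union, Finset.mem_insert, Finset.mem_singleton, id_eq, hs',
        Finset.mem_erase]
      constructor
      · rintro ((rfl | rfl) | ⟨-, -, hzs⟩)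
        exacts [hx, hys, hzs]
      · intro hzs
        by_cases h1 : z = x
        · exact Or.inl (Or.inl h1)
        by_cases h2 : z = y
        · exact Or.inl (Or.inr h2)
        · exact Or.inr ⟨h2, h1, hzs⟩

lemma fiber_card {G : SimpleGraph V} [Fintype G.edgeSet] (o : Sym2 V → V) (v : V) :
    (Finset.univ.filter (fun e : G.edgeSet => o e.1 = v)).card = cnt (ES G) o v := by
  unfold cnt
  refine Finset.card_bij (fun e _ => e.1) ?_ ?_ ?_
  · intro e he
    rw [Finset.mem_filter] at he ⊢
    exact ⟨mem_ES.mpr e.2, he.2⟩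
  · intro e1 _ e2 _ h
    exact Subtype.ext h
  · intro e he
    rw [Finset.mem_filter] at he
    exact ⟨⟨e, mem_ES.mp he.1⟩, Finset.mem_filter.mpr ⟨Finset.mem_univ _, he.2⟩, rfl⟩

lemma adj_of_fiber {G : SimpleGraph V} {o : Sym2 V → V} (hvo : valid (ES G) o) {v : V}
    {e f : G.edgeSet} (he : o e.1 = v) (hf : o f.1 = v) (hne : e ≠ f) :
    G.lineGraph.Adj e f := by
  rw [SimpleGraph.lineGraph_adj_iff_exists]
  exact ⟨hne, v, he ▸ hvo e.1 (mem_ES.mpr e.2), hf ▸ hvo f.1 (mem_ES.mpr f.2)⟩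

lemma fiber_disj {G : SimpleGraph V} [Fintype G.edgeSet] {o : Sym2 V → V} {v w : V} (hvw : v ≠ w) :
    Disjoint (Finset.univ.filter (fun e : G.edgeSet => o e.1 = v))
      (Finset.univ.filter (fun e : G.edgeSet => o e.1 = w)) := by
  rw [Finset.disjoint_left]
  intro e he hw
  rw [Finset.mem_filter] at he hw
  exact hvw (he.2.symm.trans hw.2)

end Stmt8

/-- If `G` is a finite connected simple graph containing an even cycle, then the
vertex set of the line graph of `G` (i.e. the edge set of `G`) can be
partitioned into a matching of the line graph together with at most one
triangle of the line graph: every part is either a pair of adjacent vertices of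
the line graph or a triple of pairwise adjacent vertices of the line graph, and
there is at most one triple. -/
theorem stmt_8 {V : Type*} [Fintype V] [DecidableEq V]
    (G : SimpleGraph V) [DecidableRel G.Adj] (hconn : G.Connected)
    (hcyc : ∃ (u : V) (c : G.Walk u u), c.IsCycle ∧ Even c.length) :
    ∃ P : Finset (Finset G.edgeSet),
      (∀ A ∈ P, (A.card = 2 ∨ A.card = 3) ∧
        (∀ e ∈ A, ∀ f ∈ A, e ≠ f → G.lineGraph.Adj e f)) ∧
      (P.filter (fun A => A.card = 3)).card ≤ 1 ∧
      (P : Set (Finset G.edgeSet)).PairwiseDisjoint id ∧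
      P.biUnion id = Finset.univ := by
  classical
  have hec : ∀ x y, x ∈ G.support → y ∈ G.support → G.Reachable x y :=
    fun x y _ _ => hconn.preconnected x y
  rcases Nat.even_or_odd (Stmt8.ES G).card with hpar | hpar
  · -- even number of edges: perfect matching of the line graph
    obtain ⟨o, hvo, hb⟩ := Stmt8.exists_orient G hec (fun _ => 0) (fun _ _ => rfl)
      (by rw [Finset.sum_const_zero]; exact ((Stmt8.cast_zero_iff_even _).mpr hpar).symm)
    have hfib : ∀ v, Even (Finset.univ.filter (fun e : G.edgeSet => o e.1 = v)).card := by
      intro v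
      rw [Stmt8.fiber_card]
      exact (Stmt8.cast_zero_iff_even _).mp (hb v)
    have hP := fun v : V => Stmt8.pairing _
      (Finset.univ.filter (fun e : G.edgeSet => o e.1 = v)) le_rfl (hfib v)
    choose f hf1 hf2 hf3 using hP
    refine ⟨Finset.univ.biUnion f, ?_, ?_, ?_, ?_⟩
    · intro A hA
      obtain ⟨v, -, hAv⟩ := Finset.mem_biUnion.mp hA
      refine ⟨Or.inl (hf1 v A hAv).1, ?_⟩
      intro e he ef hf' hne
      have h1 := Finset.mem_filter.mp ((hf1 v A hAv).2 he)
      have h2 := Finset.mem_filter.mp ((hf1 v A hAv).2 hf')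
      exact Stmt8.adj_of_fiber hvo h1.2 h2.2 hne
    · have : (Finset.univ.biUnion f).filter (fun A => A.card = 3) = ∅ := by
        rw [Finset.filter_eq_empty_iff]
        intro A hA
        obtain ⟨v, -, hAv⟩ := Finset.mem_biUnion.mp hA
        rw [(hf1 v A hAv).1]
        omega
      rw [this]
      simp
    · intro A hA B hB hAB
      obtain ⟨v, -, hAv⟩ := Finset.mem_biUnion.mp (Finset.mem_coe.mp hA)
      obtain ⟨w, -, hBw⟩ := Finset.mem_biUnion.mp (Finset.mem_coe.mp hB)
      by_cases hvw : v = w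
      · subst hvw
        exact hf2 v (Finset.mem_coe.mpr hAv) (Finset.mem_coe.mpr hBw) hAB
      · exact Finset.disjoint_of_subset_left (hf1 v A hAv).2
          (Finset.disjoint_of_subset_right (hf1 w B hBw).2 (Stmt8.fiber_disj hvw))
    · apply Finset.eq_univ_of_forall
      intro e
      rw [Finset.mem_biUnion]
      have he : e ∈ Finset.univ.filter (fun e' : G.edgeSet => o e'.1 = o e.1) := by
        rw [Finset.mem_filter]; exact ⟨Finset.mem_univ _, rfl⟩
      rw [← hf3 (o e.1), Finset.mem_biUnion] at he
      obtain ⟨A, hA, heA⟩ := he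
      exact ⟨A, Finset.mem_biUnion.mpr ⟨o e.1, Finset.mem_univ _, hA⟩, heA⟩
  · -- odd number of edges
    obtain ⟨o, a, hvo, hev, hodd_a, h3⟩ :=
      Stmt8.odd_main (Stmt8.ES G).card G le_rfl hec hcyc hpar
    have hodd_nat : Odd (Stmt8.cnt (Stmt8.ES G) o a) := (Stmt8.cast_one_iff_odd _).mp hodd_a
    obtain ⟨T, hTsub, hT3⟩ := Finset.exists_subset_card_eq
      (s := Finset.univ.filter (fun e : G.edgeSet => o e.1 = a)) (n := 3)
      (by rw [Stmt8.fiber_card]; exact h3)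
    set F' : V → Finset G.edgeSet := fun v =>
      if v = a then (Finset.univ.filter (fun e : G.edgeSet => o e.1 = a)) \ T
      else Finset.univ.filter (fun e : G.edgeSet => o e.1 = v) with hF'
    have hF'sub : ∀ v, F' v ⊆ Finset.univ.filter (fun e : G.edgeSet => o e.1 = v) := by
      intro v
      simp only [hF']
      by_cases hva : v = a
      · rw [if_pos hva, hva]
        exact Finset.sdiff_subset
      · rw [if_neg hva]
    have hF'even : ∀ v, Even (F' v).card := by
      intro v
      simp only [hF']
      by_cases hva : v = a
      · rw [if_pos hva, Finset.card_sdiff_of_subset hTsub, hT3, Stmt8.fiber_card]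
        rcases hodd_nat with ⟨k, hk⟩
        exact ⟨k - 1, by omega⟩
      · rw [if_neg hva]
        rw [Stmt8.fiber_card]
        exact (Stmt8.cast_zero_iff_even _).mp (hev v hva)
    have hP := fun v : V => Stmt8.pairing _ (F' v) le_rfl (hF'even v)
    choose f hf1 hf2 hf3 using hP
    have hTfib : T ⊆ Finset.univ.filter (fun e : G.edgeSet => o e.1 = a) := hTsub
    refine ⟨insert T (Finset.univ.biUnion f), ?_, ?_, ?_, ?_⟩
    · intro A hA
      rcases Finset.mem_insert.mp hA with rfl | hA2
      · refine ⟨Or.inr hT3, ?_⟩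
        intro e he ef hf' hne
        have h1 := Finset.mem_filter.mp (hTfib he)
        have h2 := Finset.mem_filter.mp (hTfib hf')
        exact Stmt8.adj_of_fiber hvo h1.2 h2.2 hne
      · obtain ⟨v, -, hAv⟩ := Finset.mem_biUnion.mp hA2
        refine ⟨Or.inl (hf1 v A hAv).1, ?_⟩
        intro e he ef hf' hne
        have h1 := Finset.mem_filter.mp (hF'sub v ((hf1 v A hAv).2 he))
        have h2 := Finset.mem_filter.mp (hF'sub v ((hf1 v A hAv).2 hf'))
        exact Stmt8.adj_of_fiber hvo h1.2 h2.2 hne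
    · have hsub : (insert T (Finset.univ.biUnion f)).filter (fun A => A.card = 3) ⊆ {T} := by
        intro A hA
        rw [Finset.mem_filter] at hA
        rcases Finset.mem_insert.mp hA.1 with rfl | hA2
        · exact Finset.mem_singleton_self _
        · obtain ⟨v, -, hAv⟩ := Finset.mem_biUnion.mp hA2
          have := (hf1 v A hAv).1
          omega
      calc ((insert T (Finset.univ.biUnion f)).filter (fun A => A.card = 3)).card
          ≤ ({T} : Finset (Finset G.edgeSet)).card := Finset.card_le_card hsub
        _ = 1 := Finset.card_singleton _
    · rw [Finset.coe_insert]
      refine Set.PairwiseDisjoint.insert ?_ ?_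
      · intro A hA B hB hAB
        obtain ⟨v, -, hAv⟩ := Finset.mem_biUnion.mp (Finset.mem_coe.mp hA)
        obtain ⟨w, -, hBw⟩ := Finset.mem_biUnion.mp (Finset.mem_coe.mp hB)
        by_cases hvw : v = w
        · subst hvw
          exact hf2 v (Finset.mem_coe.mpr hAv) (Finset.mem_coe.mpr hBw) hAB
        · exact Finset.disjoint_of_subset_left ((hf1 v A hAv).2.trans (hF'sub v))
            (Finset.disjoint_of_subset_right ((hf1 w B hBw).2.trans (hF'sub w))
              (Stmt8.fiber_disj hvw))
      · intro A hA hTA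
        obtain ⟨v, -, hAv⟩ := Finset.mem_biUnion.mp (Finset.mem_coe.mp hA)
        have hAsub : A ⊆ F' v := (hf1 v A hAv).2
        by_cases hva : v = a
        · have hFa : F' v = (Finset.univ.filter (fun e : G.edgeSet => o e.1 = a)) \ T := by
            simp only [hF']
            rw [if_pos hva]
          refine Finset.disjoint_of_subset_right hAsub ?_
          rw [hFa]
          exact Finset.disjoint_sdiff
        · exact Finset.disjoint_of_subset_right (hAsub.trans (hF'sub v))
            (Finset.disjoint_of_subset_left hTfib (Stmt8.fiber_disj (fun h => hva h.symm)))
    · apply Finset.eq_univ_of_forall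
      intro e
      rw [Finset.mem_biUnion]
      by_cases heT : e ∈ T
      · exact ⟨T, Finset.mem_insert_self _ _, heT⟩
      · have he : e ∈ F' (o e.1) := by
          have hrw : F' (o e.1) = if o e.1 = a
              then (Finset.univ.filter (fun e' : G.edgeSet => o e'.1 = a)) \ T
              else Finset.univ.filter (fun e' : G.edgeSet => o e'.1 = o e.1) := by
            rw [hF']
          rw [hrw]
          by_cases hva : o e.1 = a
          · rw [if_pos hva, Finset.mem_sdiff, Finset.mem_filter]
            exact ⟨⟨Finset.mem_univ _, hva⟩, heT⟩
          · rw [if_neg hva, Finset.mem_filter]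
            exact ⟨Finset.mem_univ _, rfl⟩
        rw [← hf3 (o e.1), Finset.mem_biUnion] at he
        obtain ⟨A, hA, heA⟩ := he
        exact ⟨A, Finset.mem_insert_of_mem (Finset.mem_biUnion.mpr ⟨o e.1, Finset.mem_univ _, hA⟩),
          heA⟩
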